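/- Canonicity of axiom BD2: let F = (A, Q, ▷, ◇, ▷', ◇') be a heterogeneous LRC-algebra with canonical extensions A^δ, Q^δ, π-extended operations ▷^π and ▷'^π, and σ-extended operation ◇'^σ. Then q ▷'^π w ≤ q ▷^π (◇'^σ w) for all q, w ∈ Q^δ. -/

import Mathlib

/-! ## Heterogeneous LRC-algebras -/

/-- A heterogeneous LRC-algebra `F = (W, R, ▷, ◇, ▷', ◇')`: `W` is a Heyting
algebra, `R` is a bounded distributive lattice with an associative product
`·` (here `mul`) preserving finite joins in each coordinate whose unit is the
top element `1 = ⊤` of `R`; `◇ : W → W` (`dia`) and `◇' : R → W` (`diaR`)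
preserve finite joins; `▷ : R × W → W` (`box`) turns finite joins in its first
coordinate into meets and is monotone in its second coordinate;
`▷' : R × R → W` (`boxR`) turns finite joins in its first coordinate into
meets and preserves finite meets in its second coordinate; and the axioms
B3, BD1, BD2 hold. -/
structure LRCAlgebra (W : Type*) (R : Type*) [iW : HeytingAlgebra W]
    [iR : DistribLattice R] [iB : BoundedOrder R] where
  mul : R → R → R
  mul_assoc : ∀ a b c, mul (mul a b) c = mul a (mul b c)
  mul_top : ∀ a, mul a ⊤ = a
  top_mul : ∀ a, mul ⊤ a = a
  mul_sup_left : ∀ a b c, mul (a ⊔ b) c = mul a c ⊔ mul b c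
  mul_sup_right : ∀ a b c, mul a (b ⊔ c) = mul a b ⊔ mul a c
  mul_bot_left : ∀ a, mul ⊥ a = ⊥
  mul_bot_right : ∀ a, mul a ⊥ = ⊥
  dia : W → W
  dia_bot : dia ⊥ = ⊥
  dia_sup : ∀ a b, dia (a ⊔ b) = dia a ⊔ dia b
  diaR : R → W
  diaR_bot : diaR ⊥ = ⊥
  diaR_sup : ∀ a b, diaR (a ⊔ b) = diaR a ⊔ diaR b
  box : R → W → W
  box_sup : ∀ α β a, box (α ⊔ β) a = box α a ⊓ box β a
  box_bot : ∀ a, box ⊥ a = ⊤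
  box_mono : ∀ (α : R) {a b : W}, a ≤ b → box α a ≤ box α b
  boxR : R → R → W
  boxR_sup : ∀ α β γ, boxR (α ⊔ β) γ = boxR α γ ⊓ boxR β γ
  boxR_bot : ∀ γ, boxR ⊥ γ = ⊤
  boxR_inf : ∀ α β γ, boxR α (β ⊓ γ) = boxR α β ⊓ boxR α γ
  boxR_top : ∀ α, boxR α ⊤ = ⊤
  b3 : ∀ α β a, box α (box β a) ≤ box (mul α β) a
  bd1 : ∀ α a, diaR α ⊓ box α a ≤ dia a
  bd2 : ∀ α β, boxR α β ≤ box α (diaR β)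

/-! ## Canonical extensions of bounded distributive lattices -/

/-- A *canonical extension* of a bounded distributive lattice `L` is a
complete (distributive) lattice `Lδ` containing `L` as a bounded sublattice
(via the embedding `e`) such that (denseness) every element of `Lδ` is both a
join of closed elements (meets of elements of `L`) and a meet of open elements
(joins of elements of `L`), and (compactness) whenever `⋀ e '' S ≤ ⋁ e '' T`
there are finite `F ⊆ S`, `G ⊆ T` with `⋀ e '' F ≤ ⋁ e '' G`. -/
structure CanonicalExtension (L : Type*) [DistribLattice L] [OrderBot L]
    [OrderTop L] (Lδ : Type*) [CompleteLattice Lδ] where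
  e : L → Lδ
  inj : Function.Injective e
  map_sup : ∀ a b, e (a ⊔ b) = e a ⊔ e b
  map_inf : ∀ a b, e (a ⊓ b) = e a ⊓ e b
  map_bot : e ⊥ = ⊥
  map_top : e ⊤ = ⊤
  dense_closed : ∀ u : Lδ,
    u = sSup {k | (∃ S : Set L, k = sInf (e '' S)) ∧ k ≤ u}
  dense_open : ∀ u : Lδ,
    u = sInf {o | (∃ S : Set L, o = sSup (e '' S)) ∧ u ≤ o}
  compact : ∀ S T : Set L, sInf (e '' S) ≤ sSup (e '' T) →
    ∃ Fs Gs : Finset L, ↑Fs ⊆ S ∧ ↑Gs ⊆ T ∧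
      sInf (e '' ↑Fs) ≤ sSup (e '' ↑Gs)

namespace CanonicalExtension

variable {L : Type*} [DistribLattice L] [OrderBot L] [OrderTop L]
  {Lδ : Type*} [CompleteLattice Lδ]

/-- An element of `Lδ` is *closed* if it is a meet of elements of `L`. -/
def IsClosed (C : CanonicalExtension L Lδ) (k : Lδ) : Prop :=
  ∃ S : Set L, k = sInf (C.e '' S)

/-- An element of `Lδ` is *open* if it is a join of elements of `L`. -/
def IsOpen (C : CanonicalExtension L Lδ) (o : Lδ) : Prop :=
  ∃ S : Set L, o = sSup (C.e '' S)

end CanonicalExtension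

/-! ## The σ- and π-extensions of the operations of a heterogeneous
LRC-algebra to the canonical extensions -/

section Extensions

variable {W R : Type*} [HeytingAlgebra W] [DistribLattice R] [BoundedOrder R]
  {Wδ Rδ : Type*} [CompletelyDistribLattice Wδ] [CompletelyDistribLattice Rδ]
  (F : LRCAlgebra W R)
  (CW : CanonicalExtension W Wδ) (CR : CanonicalExtension R Rδ)

/-- `◇^σ`: for closed `k`, `◇^σ k = ⋀{◇a : a ∈ W, k ≤ a}`, and for arbitrary
`u`, `◇^σ u = ⋁{◇^σ k : k closed, k ≤ u}`. -/
noncomputable def diaSigma (u : Wδ) : Wδ :=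
  ⨆ k : {k : Wδ // CW.IsClosed k ∧ k ≤ u},
    ⨅ a : {a : W // k.1 ≤ CW.e a}, CW.e (F.dia a.1)

/-- `◇'^σ`: for closed `κ`, `◇'^σ κ = ⋀{◇'α : α ∈ R, κ ≤ α}`, and for
arbitrary `q`, `◇'^σ q = ⋁{◇'^σ κ : κ closed, κ ≤ q}`. -/
noncomputable def diaRSigma (q : Rδ) : Wδ :=
  ⨆ κ : {κ : Rδ // CR.IsClosed κ ∧ κ ≤ q},
    ⨅ α : {α : R // κ.1 ≤ CR.e α}, CW.e (F.diaR α.1)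

/-- `κ ▷^π o` for `κ ∈ K(Rδ)`, `o ∈ O(Wδ)`:
`⋁{α ▷ a : a ∈ W, a ≤ o, α ∈ R, κ ≤ α}`. -/
noncomputable def boxPiKO (κ : Rδ) (o : Wδ) : Wδ :=
  ⨆ p : {p : R × W // CW.e p.2 ≤ o ∧ κ ≤ CR.e p.1}, CW.e (F.box p.1.1 p.1.2)

/-- `▷^π`: `q ▷^π u = ⋀{κ ▷^π o : o open, u ≤ o, κ closed, κ ≤ q}`. -/
noncomputable def boxPi (q : Rδ) (u : Wδ) : Wδ :=
  ⨅ x : {x : Rδ × Wδ // CW.IsOpen x.2 ∧ u ≤ x.2 ∧ CR.IsClosed x.1 ∧ x.1 ≤ q},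
    boxPiKO F CW CR x.1.1 x.1.2

/-- `κ ▷'^π ω` for `κ ∈ K(Rδ)`, `ω ∈ O(Rδ)`:
`⋁{α ▷' β : β ∈ R, β ≤ ω, α ∈ R, κ ≤ α}`. -/
noncomputable def boxRPiKO (κ ω : Rδ) : Wδ :=
  ⨆ p : {p : R × R // CR.e p.2 ≤ ω ∧ κ ≤ CR.e p.1}, CW.e (F.boxR p.1.1 p.1.2)

/-- `▷'^π`: `q ▷'^π w = ⋀{κ ▷'^π ω : ω open, w ≤ ω, κ closed, κ ≤ q}`. -/
noncomputable def boxRPi (q w : Rδ) : Wδ :=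
  ⨅ x : {x : Rδ × Rδ // CR.IsOpen x.2 ∧ w ≤ x.2 ∧ CR.IsClosed x.1 ∧ x.1 ≤ q},
    boxRPiKO F CW CR x.1.1 x.1.2

/-- `κ₁ ·^σ κ₂` for closed `κ₁, κ₂`: `⋀{α·β : α, β ∈ R, κ₁ ≤ α, κ₂ ≤ β}`. -/
noncomputable def mulSigmaKK (κ₁ κ₂ : Rδ) : Rδ :=
  ⨅ p : {p : R × R // κ₁ ≤ CR.e p.1 ∧ κ₂ ≤ CR.e p.2}, CR.e (F.mul p.1.1 p.1.2)

/-- `·^σ`: `q₁ ·^σ q₂ = ⋁{κ₁ ·^σ κ₂ : κ₁, κ₂ closed, κ₁ ≤ q₁, κ₂ ≤ q₂}`. -/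
noncomputable def mulSigma (q₁ q₂ : Rδ) : Rδ :=
  ⨆ p : {p : Rδ × Rδ // CR.IsClosed p.1 ∧ CR.IsClosed p.2 ∧
      p.1 ≤ q₁ ∧ p.2 ≤ q₂}, mulSigmaKK F CR p.1.1 p.1.2

end Extensions

variable {W R : Type*} [HeytingAlgebra W] [DistribLattice R] [BoundedOrder R]
  {Wδ Rδ : Type*} [CompletelyDistribLattice Wδ] [CompletelyDistribLattice Rδ]


section Aux

variable {L : Type*} [DistribLattice L] [OrderBot L] [OrderTop L]
  {Lδ : Type*} [CompleteLattice Lδ]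

lemma CanonicalExtension.mono (C : CanonicalExtension L Lδ) :
    Monotone C.e := fun a b h => by
  calc C.e a ≤ C.e a ⊔ C.e b := le_sup_left
    _ = C.e (a ⊔ b) := (C.map_sup a b).symm
    _ = C.e b := by rw [sup_eq_right.mpr h]

lemma CanonicalExtension.reflect (C : CanonicalExtension L Lδ) {a b : L}
    (h : C.e a ≤ C.e b) : a ≤ b := by
  have : C.e (a ⊔ b) = C.e b := by rw [C.map_sup, sup_eq_right.mpr h]
  exact sup_eq_right.mp (C.inj this)

lemma map_finsetSup {ι β γ : Type*} [SemilatticeSup β] [OrderBot β]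
    [SemilatticeSup γ] [OrderBot γ] (f : β → γ) (hb : f ⊥ = ⊥)
    (hs : ∀ a b, f (a ⊔ b) = f a ⊔ f b) (G : Finset ι) (g : ι → β) :
    f (G.sup g) = G.sup (fun i => f (g i)) := by
  classical
  induction G using Finset.induction_on with
  | empty => simpa
  | insert _ _ h ih => simp [Finset.sup_insert, hs, ih]

lemma map_finsetInf {ι β γ : Type*} [SemilatticeInf β] [OrderTop β]
    [SemilatticeInf γ] [OrderTop γ] (f : β → γ) (hb : f ⊤ = ⊤)
    (hs : ∀ a b, f (a ⊓ b) = f a ⊓ f b) (G : Finset ι) (g : ι → β) :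
    f (G.inf g) = G.inf (fun i => f (g i)) := by
  classical
  induction G using Finset.induction_on with
  | empty => simpa
  | insert _ _ h ih => simp [Finset.inf_insert, hs, ih]

lemma finset_sSup_image (C : CanonicalExtension L Lδ) (G : Finset L) :
    sSup (C.e '' ↑G) = C.e (G.sup id) := by
  rw [map_finsetSup C.e C.map_bot C.map_sup]
  rw [sSup_image]
  exact (Finset.sup_eq_iSup G C.e).symm

end Aux

section AuxLRC

variable {W R : Type*} [HeytingAlgebra W] [DistribLattice R] [BoundedOrder R]

lemma LRCAlgebra.diaR_mono (F : LRCAlgebra W R) {a b : R} (h : a ≤ b) :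
    F.diaR a ≤ F.diaR b := by
  calc F.diaR a ≤ F.diaR a ⊔ F.diaR b := le_sup_left
    _ = F.diaR (a ⊔ b) := (F.diaR_sup a b).symm
    _ = F.diaR b := by rw [sup_eq_right.mpr h]

end AuxLRC

/-! ## Statement 8: canonicity of axiom BD2 -/

/-- **Canonicity of axiom BD2**: in the canonical extension of a heterogeneous
LRC-algebra, `q ▷'^π w ≤ q ▷^π (◇'^σ w)` for all `q, w ∈ Rδ`. -/
theorem canonicity_bd2 (F : LRCAlgebra W R)
    (CW : CanonicalExtension W Wδ) (CR : CanonicalExtension R Rδ)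
    (q w : Rδ) :
    boxRPi F CW CR q w ≤ boxPi F CW CR q (diaRSigma F CW CR w) := by
  refine le_iInf fun x => ?_
  obtain ⟨⟨κ, o⟩, ho, hdo, hκc, hκq⟩ := x
  obtain ⟨U, hU⟩ := ho
  set S : Set R := {β | CW.e (F.diaR β) ≤ o} with hS
  set ω : Rδ := sSup (CR.e '' S) with hω
  -- Step 1 : w ≤ ω
  have hwω : w ≤ ω := by
    rw [CR.dense_closed w]
    refine sSup_le fun k hk => ?_
    obtain ⟨⟨T, rfl⟩, hkw⟩ := hk
    set k : Rδ := sInf (CR.e '' T) with hkdef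
    -- the closed-piece infimum of diaRSigma is below o
    have h1 : sInf ((fun α => CW.e (F.diaR α)) '' {α | k ≤ CR.e α}) ≤ o := by
      rw [sInf_image']
      refine le_trans ?_ hdo
      exact le_iSup_of_le ⟨k, ⟨T, rfl⟩, hkw⟩ le_rfl
    have h1' : sInf (CW.e '' (F.diaR '' {α | k ≤ CR.e α}))
        ≤ sSup (CW.e '' U) := by
      rw [Set.image_image]; exact h1.trans hU.le
    obtain ⟨Fs, Gs, hFs, hGs, hle⟩ := CW.compact _ _ h1'
    -- choose preimages of elements of Fs
    have hex : ∀ x ∈ Fs, ∃ α : R, k ≤ CR.e α ∧ F.diaR α = x := by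
      intro x hx
      obtain ⟨α, hα, rfl⟩ := hFs hx
      exact ⟨α, hα, rfl⟩
    choose g hg1 hg2 using hex
    classical
    set αm : R := Fs.attach.inf (fun x => g x.1 x.2) with hαm
    have hkαm : k ≤ CR.e αm := by
      rw [hαm, map_finsetInf CR.e CR.map_top CR.map_inf]
      exact Finset.le_inf fun x _ => hg1 x.1 x.2
    have hαmS : αm ∈ S := by
      have h2 : CW.e (F.diaR αm) ≤ sInf (CW.e '' ↑Fs) := by
        refine le_sInf fun b hb => ?_
        obtain ⟨x, hx, rfl⟩ := hb
        have : αm ≤ g x hx := Finset.inf_le (Finset.mem_attach _ ⟨x, hx⟩)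
        have := CW.mono (F.diaR_mono this)
        rwa [hg2 x hx] at this
      have h3 : sSup (CW.e '' ↑Gs) ≤ o := by
        exact (sSup_le_sSup (Set.image_mono hGs)).trans hU.ge
      exact (h2.trans hle).trans h3
    exact le_trans hkαm (le_sSup ⟨αm, hαmS, rfl⟩)
  -- Step 2 : reduce to boxRPiKO κ ω ≤ boxPiKO κ o
  refine le_trans (iInf_le_of_le ⟨(κ, ω), ⟨S, rfl⟩, hwω, hκc, hκq⟩ le_rfl) ?_
  refine iSup_le fun p => ?_
  obtain ⟨⟨α, β⟩, hβω, hκα⟩ := p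
  -- compactness : e β ≤ ω gives a finite G ⊆ S with β ≤ sup G
  have hcomp : sInf (CR.e '' ({β} : Set R)) ≤ sSup (CR.e '' S) := by
    simpa using hβω
  obtain ⟨Fs, Gs, hFs, hGs, hle⟩ := CR.compact _ _ hcomp
  set γ : R := Gs.sup id with hγ
  have hβγ : β ≤ γ := by
    have h1 : CR.e β ≤ sInf (CR.e '' ↑Fs) := by
      refine le_sInf fun b hb => ?_
      obtain ⟨x, hx, rfl⟩ := hb
      have : x = β := hFs hx
      subst this; exact le_rfl
    have h2 : sSup (CR.e '' ↑Gs) = CR.e γ := finset_sSup_image CR Gs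
    exact CR.reflect (by rw [← h2]; exact h1.trans hle)
  have hγo : CW.e (F.diaR γ) ≤ o := by
    rw [hγ, map_finsetSup F.diaR F.diaR_bot F.diaR_sup,
      map_finsetSup CW.e CW.map_bot CW.map_sup]
    exact Finset.sup_le fun g hg => hGs hg
  have hβo : CW.e (F.diaR β) ≤ o :=
    (CW.mono (F.diaR_mono hβγ)).trans hγo
  -- conclude with BD2
  refine le_trans (CW.mono (F.bd2 α β)) ?_
  exact le_iSup_of_le ⟨(α, F.diaR β), hβo, hκα⟩ le_rfl
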